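/- Let ρ be a PSD matrix indexed by (Fin d_a) × (Fin d) with trace 1. Then for all matrices X, Y indexed by (Fin d_a) × J_k that are PSD with trace 1, every Hermitian matrix u indexed by (Fin d_a) × (Fin d), and every Hermitian matrix z indexed by (Fin d_a) × J_k, one has (1/2)·‖A(X) − ρ‖² + (1/2)·‖T(X) − Y‖² + (1/2)·‖u‖² + (1/2)·‖z‖² + Re(Tr(ρ·u)) + λmax(−A†(u) − T(z)) + λmax(z) ≥ 0 (weak duality / nonnegativity of the duality gap for the PST least-squares primal-dual pair). -/

import Mathlib

open Matrix
open scoped Kronecker ComplexOrder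

noncomputable section

instance monoDecidable {k d : ℕ} : DecidablePred (Monotone : (Fin k → Fin d) → Prop) :=
  fun f => decidable_of_iff (∀ a b : Fin k, a ≤ b → f a ≤ f b) Iff.rfl

/-- `Jk d k` : nondecreasing sequences of length `k` from `{0, …, d-1}`. -/
abbrev Jk (d k : ℕ) := {f : Fin k → Fin d // Monotone f}

/-- the nondecreasing rearrangement of a sequence. -/
def sortTuple {d k : ℕ} (i : Fin k → Fin d) : Jk d k :=
  ⟨i ∘ Tuple.sort i, Tuple.monotone_sort i⟩

/-- `permCount j` : the number of sequences whose sorted rearrangement is `j`. -/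
def permCount {d k : ℕ} (j : Jk d k) : ℕ :=
  (Finset.univ.filter fun i : Fin k → Fin d => sortTuple i = j).card

/-- The scaled partition matrix `P`. -/
def Pmat (d k : ℕ) : Matrix (Fin k → Fin d) (Jk d k) ℂ :=
  fun i j => if sortTuple i = j then (((permCount j : ℝ) ^ (-(1/2) : ℝ) : ℝ) : ℂ) else 0

/-- `cons0 b r` is the sequence `b⌢r` sending `0` to `b` and `s+1` to `r s`. -/
def cons0 {d k : ℕ} (b : Fin d) (r : Fin (k - 1) → Fin d) : Fin k → Fin d :=
  fun s => if h : (s : ℕ) = 0 then b else r ⟨(s : ℕ) - 1, by have := s.isLt; omega⟩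

/-- Partial trace over the last `k - 1` factors. -/
def PTr (da d k : ℕ)
    (M : Matrix (Fin da × (Fin k → Fin d)) (Fin da × (Fin k → Fin d)) ℂ) :
    Matrix (Fin da × Fin d) (Fin da × Fin d) ℂ :=
  fun p q => ∑ r : Fin (k - 1) → Fin d, M (p.1, cons0 p.2 r) (q.1, cons0 q.2 r)

/-- The operator `A`. -/
def Amap (da d k : ℕ) (X : Matrix (Fin da × Jk d k) (Fin da × Jk d k) ℂ) :
    Matrix (Fin da × Fin d) (Fin da × Fin d) ℂ :=
  PTr da d k (((1 : Matrix (Fin da) (Fin da) ℂ) ⊗ₖ Pmat d k) * X *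
    ((1 : Matrix (Fin da) (Fin da) ℂ) ⊗ₖ Pmat d k)ᴴ)

/-- The extension operator `E` : `E(W) ((a,i),(a',i')) = W ((a, i 0), (a', i' 0))` when
`i` and `i'` agree on all later coordinates, and `0` otherwise. -/
def Emat (da d k : ℕ) (hk : 0 < k)
    (W : Matrix (Fin da × Fin d) (Fin da × Fin d) ℂ) :
    Matrix (Fin da × (Fin k → Fin d)) (Fin da × (Fin k → Fin d)) ℂ :=
  fun p q =>
    if ∀ s : Fin (k - 1),
        p.2 ⟨(s : ℕ) + 1, by have := s.isLt; omega⟩ =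
          q.2 ⟨(s : ℕ) + 1, by have := s.isLt; omega⟩
    then W (p.1, p.2 ⟨0, hk⟩) (q.1, q.2 ⟨0, hk⟩) else 0

/-- The adjoint operator `A†`. -/
def Adag (da d k : ℕ) (hk : 0 < k)
    (W : Matrix (Fin da × Fin d) (Fin da × Fin d) ℂ) :
    Matrix (Fin da × Jk d k) (Fin da × Jk d k) ℂ :=
  ((1 : Matrix (Fin da) (Fin da) ℂ) ⊗ₖ Pmat d k)ᴴ * Emat da d k hk W *
    ((1 : Matrix (Fin da) (Fin da) ℂ) ⊗ₖ Pmat d k)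

/-- Partial transpose in the second index. -/
def pTransp {m α : Type*} (M : Matrix (m × α) (m × α) ℂ) : Matrix (m × α) (m × α) ℂ :=
  fun p q => M (p.1, q.2) (q.1, p.2)

/-- Squared Frobenius norm. -/
def frobSq {α β : Type*} [Fintype α] [Fintype β] (M : Matrix α β ℂ) : ℝ :=
  ∑ p, ∑ q, ‖M p q‖ ^ 2

/-- Largest eigenvalue of a Hermitian matrix. -/
def lamMax {n : Type*} [Fintype n] [DecidableEq n]
    {M : Matrix n n ℂ} (hM : M.IsHermitian) : ℝ :=
  ⨆ i, hM.eigenvalues i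

end


-- ===== auxiliary lemmas =====
noncomputable section

lemma frobSq_nonneg {α β : Type*} [Fintype α] [Fintype β] (M : Matrix α β ℂ) :
    0 ≤ frobSq M :=
  Finset.sum_nonneg fun _ _ => Finset.sum_nonneg fun _ _ => sq_nonneg _

lemma trace_re_eq {α : Type*} [Fintype α] (M N : Matrix α α ℂ) :
    ((Mᴴ * N).trace).re = ∑ p : α, ∑ q : α, ((starRingEnd ℂ) (M p q) * N p q).re := by
  rw [Matrix.trace, Complex.re_sum]
  simp only [Matrix.diag, Matrix.mul_apply, Matrix.conjTranspose_apply, Complex.re_sum, Complex.star_def]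
  rw [Finset.sum_comm]

lemma frobSq_expand {α : Type*} [Fintype α] (M N : Matrix α α ℂ) :
    frobSq (M - N) = frobSq M + frobSq N - 2 * ((Mᴴ * N).trace).re := by
  rw [trace_re_eq]
  unfold frobSq
  have key : ∀ p q, ‖(M - N) p q‖ ^ 2 =
      ‖M p q‖ ^ 2 + ‖N p q‖ ^ 2 -
        2 * ((starRingEnd ℂ) (M p q) * N p q).re := by
    intro p q
    rw [Matrix.sub_apply, Complex.sq_norm, Complex.sq_norm, Complex.sq_norm]
    simp [Complex.normSq_apply, Complex.mul_re, Complex.sub_re, Complex.sub_im]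
    ring
  simp only [key, Finset.sum_sub_distrib, Finset.sum_add_distrib, ← Finset.mul_sum]



lemma trace_pTransp_mul {m α : Type*} [Fintype m] [Fintype α]
    (X z : Matrix (m × α) (m × α) ℂ) :
    (pTransp X * z).trace = (X * pTransp z).trace := by
  simp only [Matrix.trace, Matrix.diag, Matrix.mul_apply, pTransp]
  rw [← Finset.sum_product', ← Finset.sum_product']
  simp only [Finset.univ_product_univ]
  let e : ((m × α) × (m × α)) ≃ ((m × α) × (m × α)) :=
    Function.Involutive.toPerm (fun x => ((x.1.1, x.2.2), (x.2.1, x.1.2)))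
      (fun x => rfl)
  exact Fintype.sum_equiv e _ _ (fun x => rfl)

end

noncomputable section

lemma cons0_zero {d k : ℕ} (hk : 0 < k) (b : Fin d) (r : Fin (k-1) → Fin d) :
    cons0 b r ⟨0, hk⟩ = b := by simp [cons0]

lemma cons0_succ {d k : ℕ} (b : Fin d) (r : Fin (k-1) → Fin d) (s : Fin (k-1))
    (h : (s : ℕ) + 1 < k) : cons0 b r ⟨(s : ℕ) + 1, h⟩ = r s := by
  have hne : ((⟨(s : ℕ) + 1, h⟩ : Fin k) : ℕ) ≠ 0 := Nat.succ_ne_zero _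
  simp only [cons0, dif_neg hne]
  congr 1

def consEquiv (d k : ℕ) (hk : 0 < k) : (Fin d × (Fin (k-1) → Fin d)) ≃ (Fin k → Fin d) where
  toFun p := cons0 p.1 p.2
  invFun i := (i ⟨0, hk⟩, fun s => i ⟨(s : ℕ) + 1, by have := s.isLt; omega⟩)
  left_inv p := by
    obtain ⟨b, r⟩ := p
    simp only [Prod.mk.injEq]
    exact ⟨cons0_zero hk b r, funext fun s => cons0_succ b r s (by have := s.isLt; omega)⟩
  right_inv i := by
    funext s
    by_cases h : (s : ℕ) = 0
    · simp only [cons0, dif_pos h]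
      congr 1
      exact Fin.ext h.symm
    · simp only [cons0, dif_neg h]
      congr 1
      ext
      simp only
      omega

def shuffleEquiv (da d k : ℕ) :
    (((Fin da × Fin d) × (Fin da × Fin d)) × ((Fin (k-1) → Fin d) × (Fin (k-1) → Fin d)))
      ≃ ((Fin da × (Fin d × (Fin (k-1) → Fin d))) × (Fin da × (Fin d × (Fin (k-1) → Fin d)))) where
  toFun w := ((w.1.1.1, (w.1.1.2, w.2.1)), (w.1.2.1, (w.1.2.2, w.2.2)))
  invFun y := (((y.1.1, y.1.2.1), (y.2.1, y.2.2.1)), (y.1.2.2, y.2.2.2))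
  left_inv w := rfl
  right_inv y := rfl

lemma trace_PTr_mul (da d k : ℕ) (hk : 0 < k)
    (M : Matrix (Fin da × (Fin k → Fin d)) (Fin da × (Fin k → Fin d)) ℂ)
    (u : Matrix (Fin da × Fin d) (Fin da × Fin d) ℂ) :
    (PTr da d k M * u).trace = (M * Emat da d k hk u).trace := by
  classical
  simp only [Matrix.trace, Matrix.diag, Matrix.mul_apply, PTr]
  rw [← Finset.sum_product', ← Finset.sum_product']
  simp only [Finset.univ_product_univ]
  let e := (((Equiv.refl (Fin da)).prodCongr (consEquiv d k hk)).prodCongr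
      ((Equiv.refl (Fin da)).prodCongr (consEquiv d k hk))).trans
      (Equiv.refl _)
  let g := (shuffleEquiv da d k).trans
    (((Equiv.refl (Fin da)).prodCongr (consEquiv d k hk)).prodCongr
      ((Equiv.refl (Fin da)).prodCongr (consEquiv d k hk)))
  rw [← Fintype.sum_equiv g
    (fun w => M (g w).1 (g w).2 * Emat da d k hk u (g w).2 (g w).1)
    (fun y => M y.1 y.2 * Emat da d k hk u y.2 y.1) (fun w => rfl)]
  have hgw : ∀ w, g w = ((w.1.1.1, cons0 w.1.1.2 w.2.1), (w.1.2.1, cons0 w.1.2.2 w.2.2)) :=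
    fun w => rfl
  simp only [hgw]
  simp only [Fintype.sum_prod_type]
  simp only [Emat, cons0_succ, cons0_zero, ← funext_iff, mul_ite, mul_zero,
    Finset.sum_ite_eq', Finset.mem_univ, if_true, Finset.sum_mul]

end

noncomputable section

lemma PTr_isHermitian (da d k : ℕ)
    {M : Matrix (Fin da × (Fin k → Fin d)) (Fin da × (Fin k → Fin d)) ℂ}
    (hM : M.IsHermitian) : (PTr da d k M).IsHermitian :=
  Matrix.IsHermitian.ext fun p q => by
    show star (∑ r : Fin (k-1) → Fin d, _) = _
    rw [star_sum]
    exact Finset.sum_congr rfl fun r _ => hM.apply _ _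

lemma Amap_isHermitian (da d k : ℕ)
    {X : Matrix (Fin da × Jk d k) (Fin da × Jk d k) ℂ} (hX : X.IsHermitian) :
    (Amap da d k X).IsHermitian :=
  PTr_isHermitian da d k (Matrix.isHermitian_mul_mul_conjTranspose _ hX)

lemma pTransp_isHermitian {m α : Type*} {X : Matrix (m × α) (m × α) ℂ}
    (hX : X.IsHermitian) : (pTransp X).IsHermitian :=
  Matrix.IsHermitian.ext fun p q => hX.apply _ _

lemma trace_Amap_mul (da d k : ℕ) (hk : 0 < k)
    (X : Matrix (Fin da × Jk d k) (Fin da × Jk d k) ℂ)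
    (u : Matrix (Fin da × Fin d) (Fin da × Fin d) ℂ) :
    ((Amap da d k X) * u).trace = (X * Adag da d k hk u).trace := by
  unfold Amap Adag
  rw [trace_PTr_mul da d k hk]
  rw [Matrix.mul_assoc (_ * X), Matrix.trace_mul_cycle, Matrix.trace_mul_comm,
    ← Matrix.mul_assoc, ← Matrix.mul_assoc]

end

noncomputable section
lemma trace_re_le_lamMax {n : Type*} [Fintype n] [DecidableEq n] [Nonempty n]
    (X H : Matrix n n ℂ) (hX : X.PosSemidef) (hXtr : X.trace = 1)
    (hH : H.IsHermitian) : ((X * H).trace).re ≤ lamMax hH := by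
  classical
  set U : Matrix n n ℂ := (hH.eigenvectorUnitary : Matrix n n ℂ) with hU
  have hU1 : U * star U = 1 := (Matrix.mem_unitaryGroup_iff).mp hH.eigenvectorUnitary.2
  set P : Matrix n n ℂ := Uᴴ * X * U with hP
  have hPsd : P.PosSemidef := hX.conjTranspose_mul_mul_same U
  have hPtr : P.trace = 1 := by
    rw [hP, Matrix.trace_mul_cycle, ← Matrix.star_eq_conjTranspose, hU1,
      Matrix.one_mul, hXtr]
  have hdiag : ∀ i, 0 ≤ (P i i).re ∧ (P i i).im = 0 := by
    intro i
    have h0 : 0 ≤ P i i := by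
      exact hPsd.diag_nonneg
    exact ⟨(Complex.le_def.mp h0).1, ((Complex.le_def.mp h0).2).symm⟩
  have key : (X * H).trace = ∑ i, P i i * (hH.eigenvalues i : ℂ) := by
    conv_lhs => rw [hH.spectral_theorem, Unitary.conjStarAlgAut_apply]
    rw [← Matrix.mul_assoc, ← Matrix.mul_assoc, Matrix.trace_mul_cycle]
    have h2 : star U * X * U = P := by rw [hP, Matrix.star_eq_conjTranspose]
    rw [← Matrix.mul_assoc] 
    rw [hU] at h2
    rw [h2]
    simp [Matrix.trace, Matrix.diag, Matrix.mul_diagonal, Function.comp]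
  have hretr : ∑ i, (P i i).re = 1 := by
    have := congrArg Complex.re hPtr
    simpa [Matrix.trace, Matrix.diag, Complex.re_sum] using this
  have hre : ((X * H).trace).re = ∑ i, (P i i).re * hH.eigenvalues i := by
    rw [key, Complex.re_sum]
    refine Finset.sum_congr rfl fun i _ => ?_
    rw [Complex.mul_re, Complex.ofReal_re, Complex.ofReal_im, (hdiag i).2]
    ring
  have hle : ∀ i, hH.eigenvalues i ≤ lamMax hH :=
    fun i => le_ciSup (Set.finite_range _).bddAbove i
  rw [hre]
  calc ∑ i, (P i i).re * hH.eigenvalues i ≤ ∑ i, (P i i).re * lamMax hH :=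
        Finset.sum_le_sum fun i _ => mul_le_mul_of_nonneg_left (hle i) (hdiag i).1
    _ = lamMax hH := by rw [← Finset.sum_mul, hretr, one_mul]

end

theorem stmt13 (da d k : ℕ) (hda : 0 < da) (hd : 0 < d) (hk : 0 < k)
    (ρ : Matrix (Fin da × Fin d) (Fin da × Fin d) ℂ)
    (hρ : ρ.PosSemidef) (hρtr : ρ.trace = 1)
    (X Y : Matrix (Fin da × Jk d k) (Fin da × Jk d k) ℂ)
    (hX : X.PosSemidef) (hXtr : X.trace = 1)
    (hY : Y.PosSemidef) (hYtr : Y.trace = 1)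
    (u : Matrix (Fin da × Fin d) (Fin da × Fin d) ℂ) (hu : u.IsHermitian)
    (z : Matrix (Fin da × Jk d k) (Fin da × Jk d k) ℂ) (hz : z.IsHermitian)
    (h1 : (-(Adag da d k hk u) - pTransp z).IsHermitian) :
    0 ≤ (1 / 2) * frobSq (Amap da d k X - ρ) + (1 / 2) * frobSq (pTransp X - Y) +
          (1 / 2) * frobSq u + (1 / 2) * frobSq z +
          ((ρ * u).trace).re + lamMax h1 + lamMax hz := by
  classical
  haveI : Nonempty (Fin da × Jk d k) :=
    ⟨(⟨0, hda⟩, ⟨fun _ => ⟨0, hd⟩, monotone_const⟩)⟩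
  set M1 := Amap da d k X - ρ with hM1def
  set M2 := pTransp X - Y with hM2def
  have hM1 : M1.IsHermitian := (Amap_isHermitian da d k hX.1).sub hρ.1
  have hM2 : M2.IsHermitian := (pTransp_isHermitian hX.1).sub hY.1
  set a : ℝ := (((Amap da d k X) * u).trace).re with ha
  set b : ℝ := ((pTransp X * z).trace).re with hb
  set c : ℝ := ((Y * z).trace).re with hc
  -- expansion identities
  have e1 : frobSq (M1 - u) = frobSq M1 + frobSq u - 2 * (a - ((ρ * u).trace).re) := by
    rw [frobSq_expand, hM1.eq, hM1def, Matrix.sub_mul, Matrix.trace_sub, Complex.sub_re]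
  have e2 : frobSq (M2 - z) = frobSq M2 + frobSq z - 2 * (b - c) := by
    rw [frobSq_expand, hM2.eq, hM2def, Matrix.sub_mul, Matrix.trace_sub, Complex.sub_re]
  -- eigenvalue bounds
  have l1 : -a - b ≤ lamMax h1 := by
    have h := trace_re_le_lamMax X _ hX hXtr h1
    rw [Matrix.mul_sub, Matrix.mul_neg, Matrix.trace_sub, Matrix.trace_neg, Complex.sub_re,
      Complex.neg_re, ← trace_Amap_mul da d k hk, ← trace_pTransp_mul] at h
    exact h
  have l2 : c ≤ lamMax hz := trace_re_le_lamMax Y z hY hYtr hz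
  have p1 : 0 ≤ frobSq (M1 - u) := frobSq_nonneg _
  have p2 : 0 ≤ frobSq (M2 - z) := frobSq_nonneg _
  linarith
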